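/- Let [f], [g] be two distinct proper non-empty real conics generating a pencil in one of the orbits I, Ia, II, IIa, III. Then the pair {[f],[g]} is of type N (the two conics lie on a same arc of their pencil) if and only if Φ₃₀Φ₁₂ > 0 and Φ₀₃Φ₂₁ > 0. -/

import Mathlib

open Matrix Polynomial Set

noncomputable section

/-- Real ternary quadratic forms are represented by their symmetric 3×3 matrices. -/
abbrev RMat := Matrix (Fin 3) (Fin 3) ℝ
abbrev CMat := Matrix (Fin 3) (Fin 3) ℂ

/-- The real projective plane. -/
abbrev RP2 := Projectivization ℝ (Fin 3 → ℝ)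
/-- The complex projective plane. -/
abbrev CP2 := Projectivization ℂ (Fin 3 → ℂ)

instance : TopologicalSpace RP2 :=
  instTopologicalSpaceQuotient (s := projectivizationSetoid ℝ (Fin 3 → ℝ))

/-- Evaluation of the quadratic form with matrix `F` on the vector `v`. -/
def qeval (F : RMat) (v : Fin 3 → ℝ) : ℝ := v ⬝ᵥ F.mulVec v

/-- The geometric conic `[f = 0]`: zero locus in ℝP² of the quadratic form with matrix `F`. -/
def zeroLocus (F : RMat) : Set RP2 := {p | qeval F p.rep = 0}

/-- The inside of a proper non-empty conic: the set of points where the form takes the sign of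
its discriminant `det F`. -/
def insideSet (F : RMat) : Set RP2 := {p | 0 < qeval F p.rep * F.det}

/-- The conic `[f = 0]` is non-empty. -/
def NonemptyConic (F : RMat) : Prop := ∃ v : Fin 3 → ℝ, v ≠ 0 ∧ qeval F v = 0

/-- A couple of distinct (non-proportional) proper non-empty conics, given by the symmetric
matrices of two nondegenerate quadratic forms. -/
def GoodCouple (F G : RMat) : Prop :=
  F.IsSymm ∧ G.IsSymm ∧ F.det ≠ 0 ∧ G.det ≠ 0 ∧
  (∀ c : ℝ, G ≠ c • F) ∧ NonemptyConic F ∧ NonemptyConic G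

/-- Complexification of a real quadratic form. -/
def cx (F : RMat) : CMat := F.map (fun x => (x : ℂ))

/-- The quadratic form with matrix `M`, as a polynomial in three variables. -/
def formPoly (M : CMat) : MvPolynomial (Fin 3) ℂ :=
  ∑ i : Fin 3, ∑ j : Fin 3, MvPolynomial.C (M i j) * (MvPolynomial.X i * MvPolynomial.X j)

/-- The maximal ideal of the point `q` of affine 3-space. -/
def ptIdeal (q : Fin 3 → ℂ) : Ideal (MvPolynomial (Fin 3) ℂ) :=
  Ideal.span (Set.range fun i => MvPolynomial.X i - MvPolynomial.C (q i))

/-- Intersection multiplicity of the conics of `F` and `G` at the affine point `q` of the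
chart `xᵢ = 1`: the dimension of the local ring at `q` of the intersection scheme
(cut off at order 4, which is harmless since the total intersection degree of two distinct
proper conics is 4). -/
def chartMult (F G : CMat) (i : Fin 3) (q : Fin 3 → ℂ) : ℕ :=
  Module.finrank ℂ (MvPolynomial (Fin 3) ℂ ⧸
    (Ideal.span {formPoly F, formPoly G, MvPolynomial.X i - 1} ⊔ (ptIdeal q) ^ 4))

open scoped Classical in
/-- Intersection multiplicity of the conics of `F` and `G` at the point `p ∈ ℂP²`. -/
def interMult (F G : CMat) (p : CP2) : ℕ :=
  Finset.univ.sup fun i : Fin 3 =>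
    if p.rep i = 0 then 0 else chartMult F G i ((p.rep i)⁻¹ • p.rep)

/-- A point of ℂP² is real if it admits a real representative. -/
def IsRealPt (p : CP2) : Prop := ∀ i j, (p.rep i * (starRingEnd ℂ) (p.rep j)).im = 0

/-- Number of real intersection points of given multiplicity `m`. -/
def realMultCount (F G : CMat) (m : ℕ) : ℕ :=
  {p : CP2 | interMult F G p = m ∧ IsRealPt p}.ncard

/-- Number of imaginary (non-real) intersection points of given multiplicity `m`;
these come in complex-conjugate pairs. -/
def imagMultCount (F G : CMat) (m : ℕ) : ℕ :=
  {p : CP2 | interMult F G p = m ∧ ¬ IsRealPt p}.ncard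

/-- A continuous path (on `[0,1]`) in the space of couples of distinct proper conics along
which the numbers of real and of imaginary intersection points of each multiplicity stay
constant. -/
def RigidPath (F G : ℝ → RMat) : Prop :=
  ContinuousOn F (Icc 0 1) ∧ ContinuousOn G (Icc 0 1) ∧
  (∀ t ∈ Icc (0:ℝ) 1, (F t).IsSymm ∧ (G t).IsSymm ∧ (F t).det ≠ 0 ∧ (G t).det ≠ 0 ∧
     ∀ c : ℝ, G t ≠ c • F t) ∧
  (∀ t ∈ Icc (0:ℝ) 1, ∀ m : ℕ, 0 < m →
     realMultCount (cx (F t)) (cx (G t)) m = realMultCount (cx (F 0)) (cx (G 0)) m ∧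
     imagMultCount (cx (F t)) (cx (G t)) m = imagMultCount (cx (F 0)) (cx (G 0)) m)

/-- Two matrices define the same algebraic conic. -/
def ProjEq (M N : RMat) : Prop := ∃ c : ℝ, c ≠ 0 ∧ M = c • N

/-- Rigid isotopy of couples of (algebraic) conics. -/
def RigidlyIsotopic (F₁ G₁ F₂ G₂ : RMat) : Prop :=
  ∃ F G : ℝ → RMat, RigidPath F G ∧
    ProjEq (F 0) F₁ ∧ ProjEq (G 0) G₁ ∧ ProjEq (F 1) F₂ ∧ ProjEq (G 1) G₂

/-- Equivalence of pairs: rigid isotopy together with possible exchange of the two conics. -/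
def PairEquiv (F₁ G₁ F₂ G₂ : RMat) : Prop :=
  RigidlyIsotopic F₁ G₁ F₂ G₂ ∨ RigidlyIsotopic F₁ G₁ G₂ F₂

/-- An isotopy of ℝP² (parametrized by `[0,1]`): jointly continuous, each time-`t` map a
homeomorphism, starting from the identity. -/
def IsIsotopy (θ : ℝ → RP2 → RP2) : Prop :=
  ContinuousOn (fun q : ℝ × RP2 => θ q.1 q.2) (Icc (0:ℝ) 1 ×ˢ univ) ∧
  θ 0 = id ∧
  ∀ t ∈ Icc (0:ℝ) 1, ∃ h : RP2 ≃ₜ RP2, θ t = h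

/-- Two couples of subsets of ℝP² are ambient isotopic. -/
def AmbientIsotopic (N₁ N₁' N₂ N₂' : Set RP2) : Prop :=
  ∃ θ : ℝ → RP2 → RP2, IsIsotopy θ ∧ ∃ t ∈ Icc (0:ℝ) 1, θ t '' N₁ = N₂ ∧ θ t '' N₁' = N₂'

/-- Ambient isotopy of couples of conics. -/
def CoupleAmbEquiv (F₁ G₁ F₂ G₂ : RMat) : Prop :=
  AmbientIsotopic (zeroLocus F₁) (zeroLocus G₁) (zeroLocus F₂) (zeroLocus G₂)

/-- Action of a linear change of coordinates on quadratic forms: `f ∘ A` has matrix `Aᵀ F A`. -/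
def transform (A : RMat) (M : RMat) : RMat := Aᵀ * M * A

/-- The pencil spanned by `[F], [G]` is the image, under a projective linear transformation,
of the pencil spanned by `[F₀], [G₀]`. -/
def PencilEquivTo (F G F₀ G₀ : RMat) : Prop :=
  ∃ A : GL (Fin 3) ℝ,
    Submodule.span ℝ ({transform (↑A) F₀, transform (↑A) G₀} : Set RMat) =
    Submodule.span ℝ ({F, G} : Set RMat)

/-- The two conics `[F]`, `[G]` lie on a same arc of the pencil they span: they can be joined
by a path inside the set of proper conics of this pencil. -/
def SameArc (F G : RMat) : Prop :=
  ∃ a b : ℝ → ℝ, ContinuousOn a (Icc 0 1) ∧ ContinuousOn b (Icc 0 1) ∧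
    (∀ t ∈ Icc (0:ℝ) 1, (a t • F + b t • G).det ≠ 0) ∧
    ProjEq (a 0 • F + b 0 • G) F ∧ ProjEq (a 1 • F + b 1 • G) G

/-- The conic `[F = 0]` lies inside the conic `[G = 0]` (except at the common points). -/
def InsideRel (F G : RMat) : Prop :=
  ∀ p ∈ zeroLocus F, p ∉ zeroLocus G → p ∈ insideSet G

/-- `p` is a point of tangency of the two conics: a common point where the tangent lines
(gradients) coincide. -/
def TangencyPt (F G : RMat) (p : RP2) : Prop :=
  p ∈ zeroLocus F ∧ p ∈ zeroLocus G ∧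
  ∃ c : ℝ, F.mulVec p.rep = c • G.mulVec p.rep ∨ G.mulVec p.rep = c • F.mulVec p.rep

/-- The conic `[F = 0]` lies inside `[G = 0]` in a punctured neighborhood of the double
intersection point. -/
def InsideNearTangency (F G : RMat) : Prop :=
  ∃ p : RP2, TangencyPt F G p ∧
    ∃ U ∈ nhds p, ∀ q ∈ U, q ≠ p → q ∈ zeroLocus F → q ∈ insideSet G

/-- The matrix of the pencil `t f + g`, over the polynomial ring ℝ[t]. -/
def pencilPolyMat (F G : RMat) : Matrix (Fin 3) (Fin 3) (Polynomial ℝ) :=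
  Matrix.of fun i j => Polynomial.C (F i j) * Polynomial.X + Polynomial.C (G i j)

/-- The (de-homogenized) characteristic form `φ(t) = Disc(t f + g)`. -/
def phiP (F G : RMat) : Polynomial ℝ := (pencilPolyMat F G).det

/-- The coefficients of the characteristic form: `ph F G 3 = Φ₃₀`, `ph F G 2 = Φ₂₁`,
`ph F G 1 = Φ₁₂`, `ph F G 0 = Φ₀₃`. -/
def ph (F G : RMat) (k : ℕ) : ℝ := (phiP F G).coeff k

/-- `ψ(t)`: the coefficient of `v` in `det (v·Id − M(tf+g)) = v³ − μ(t)v² + ψ(t)v − φ(t)`. -/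
def psiP (F G : RMat) : Polynomial ℝ := ((pencilPolyMat F G).charpoly).coeff 1

/-- `P`: the remainder of the euclidean division of `Φ₃₀ · ψ · φ′` by `φ`. -/
def Prem (F G : RMat) : Polynomial ℝ :=
  (Polynomial.C (ph F G 3) * psiP F G * derivative (phiP F G)) % (phiP F G)

/-- The coefficients `p₂, p₁, p₀` of `P`. -/
def pc (F G : RMat) (k : ℕ) : ℝ := (Prem F G).coeff k

/-- The principal subresultant coefficient `A₁ = sr₁(φ, P)`. -/
def A1 (F G : RMat) : ℝ :=
  Matrix.det !![ph F G 3, ph F G 2, ph F G 1;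
                0, pc F G 2, pc F G 1;
                pc F G 2, pc F G 1, pc F G 0]

/-- Resultant of a cubic and a quadratic (Sylvester determinant). -/
def syl32 (a3 a2 a1 a0 b2 b1 b0 : ℝ) : ℝ :=
  Matrix.det !![a3,a2,a1,a0,0; 0,a3,a2,a1,a0; b2,b1,b0,0,0; 0,b2,b1,b0,0; 0,0,b2,b1,b0]

/-- Resultant of a quadratic and a cubic (Sylvester determinant). -/
def syl23 (b2 b1 b0 a3 a2 a1 a0 : ℝ) : ℝ :=
  Matrix.det !![b2,b1,b0,0,0; 0,b2,b1,b0,0; 0,0,b2,b1,b0; a3,a2,a1,a0,0; 0,a3,a2,a1,a0]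

/-- `Res(φ, φ′)`. -/
def resPhiDPhi (F G : RMat) : ℝ :=
  syl32 (ph F G 3) (ph F G 2) (ph F G 1) (ph F G 0)
    ((derivative (phiP F G)).coeff 2) ((derivative (phiP F G)).coeff 1)
    ((derivative (phiP F G)).coeff 0)

/-- `Res(ψ, φ)`. -/
def resPsiPhi (F G : RMat) : ℝ :=
  syl23 ((psiP F G).coeff 2) ((psiP F G).coeff 1) ((psiP F G).coeff 0)
    (ph F G 3) (ph F G 2) (ph F G 1) (ph F G 0)

/-- `A₀ = −Res(φ, P) = sr₀(φ, P)`. -/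
def A0 (F G : RMat) : ℝ :=
  - syl32 (ph F G 3) (ph F G 2) (ph F G 1) (ph F G 0) (pc F G 2) (pc F G 1) (pc F G 0)

/-- The discriminant of the characteristic form, `Disc(Φ) = Res(φ,φ′)/(27 Φ₃₀)`. -/
def discPhi (F G : RMat) : ℝ := resPhiDPhi F G / (27 * ph F G 3)

/-- Coefficients of the Hessian determinant `H = H₂₀ t² + H₁₁ t u + H₀₂ u²` of `Φ`. -/
def H20 (F G : RMat) : ℝ := 4 * (3 * ph F G 3 * ph F G 1 - (ph F G 2)^2)
def H11 (F G : RMat) : ℝ := 4 * (9 * ph F G 3 * ph F G 0 - ph F G 2 * ph F G 1)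
def H02 (F G : RMat) : ℝ := 4 * (3 * ph F G 2 * ph F G 0 - (ph F G 1)^2)

/-- The Hessian covariant `H` of `Φ` vanishes identically. -/
def HVanishes (F G : RMat) : Prop := H20 F G = 0 ∧ H11 F G = 0 ∧ H02 F G = 0

/-- `Ω(f,g)`: the middle coefficient of the tangential form of `t f + g`, so that
`adj(tF+G) = adj(F) t² + Ω t + adj(G)`. -/
def OmegaM (F G : RMat) : RMat := (F + G).adjugate - F.adjugate - G.adjugate

/-- The coefficients, in the basis `X², Y², Z², YZ, XZ, XY` of quadratic forms on the dual
space, of the quadratic form with matrix `N`. -/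
def rowOf (N : RMat) : Fin 6 → ℝ := ![N 0 0, N 1 1, N 2 2, 2 * N 1 2, 2 * N 0 2, 2 * N 0 1]

/-- Maximal minors `[ijk]` of the 3×6 matrix `M` of the coefficients of `f̃`, `Ω`, `g̃`;
the columns `1, 2, 3, 1̄, 2̄, 3̄` are indexed `0, 1, 2, 3, 4, 5`. -/
def minorM (F G : RMat) (i j k : Fin 6) : ℝ :=
  Matrix.det !![rowOf F.adjugate i, rowOf F.adjugate j, rowOf F.adjugate k;
                rowOf (OmegaM F G) i, rowOf (OmegaM F G) j, rowOf (OmegaM F G) k;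
                rowOf G.adjugate i, rowOf G.adjugate j, rowOf G.adjugate k]

/-- The ten coefficients (in `x³, y³, z³, xy², xz², x²y, yz², x²z, y²z, xyz`) of the
autopolar triangle covariant `G` of `(f,g)`. -/
def Gcovar (F G : RMat) : Fin 10 → ℝ :=
  ![- minorM F G 3 1 2,
    - minorM F G 0 4 2,
    - minorM F G 0 1 5,
    minorM F G 0 3 2 + 2 * minorM F G 5 4 2,
    minorM F G 0 1 3 + 2 * minorM F G 4 1 5,
    minorM F G 4 1 2 + 2 * minorM F G 3 5 2,
    minorM F G 0 1 4 + 2 * minorM F G 0 3 5,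
    minorM F G 5 1 2 + 2 * minorM F G 3 1 4,
    minorM F G 0 5 2 + 2 * minorM F G 0 4 3,
    minorM F G 0 1 2 + 4 * minorM F G 3 4 5]

/-- The autopolar triangle covariant `G` vanishes identically. -/
def GVanishes (F G : RMat) : Prop := ∀ k, Gcovar F G k = 0

/-- The antisymmetric invariant `𝒜 = Φ₃₀Φ₁₂³ − Φ₀₃Φ₂₁³`. -/
def antisymInv (F G : RMat) : ℝ := ph F G 3 * (ph F G 1)^3 - ph F G 0 * (ph F G 2)^3

/-- Coefficients of `Q = Remainder(P·φ″, φ)`: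
`q₂ = 3p₁Φ₃₀ − 2p₂Φ₂₁`, `q₁ = 3p₀Φ₃₀ + p₁Φ₂₁ − 3p₂Φ₁₂`, `q₀ = p₀Φ₂₁ − 3p₂Φ₀₃`. -/
def qc2 (F G : RMat) : ℝ := 3 * pc F G 1 * ph F G 3 - 2 * pc F G 2 * ph F G 2
def qc1 (F G : RMat) : ℝ :=
  3 * pc F G 0 * ph F G 3 + pc F G 1 * ph F G 2 - 3 * pc F G 2 * ph F G 1
def qc0 (F G : RMat) : ℝ := pc F G 0 * ph F G 2 - 3 * pc F G 2 * ph F G 0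

/-- The subresultant coefficient `B₁ = sr₁(φ, Q)`. -/
def B1 (F G : RMat) : ℝ :=
  Matrix.det !![ph F G 3, ph F G 2, ph F G 1;
                0, qc2 F G, qc1 F G;
                qc2 F G, qc1 F G, qc0 F G]

/-- `R = 27Φ₃₀²Φ₀₃ + 2Φ₂₁³ − 6Φ₃₀Φ₂₁Φ₁₂ = Res(φ″,φ)/(8Φ₃₀)`. -/
def Rq (F G : RMat) : ℝ :=
  27 * (ph F G 3)^2 * ph F G 0 + 2 * (ph F G 2)^3 - 6 * ph F G 3 * ph F G 2 * ph F G 1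

/- Levy's representatives of the nine `PGL(3,ℝ)`-orbits of non-degenerate pencils of conics:
orbit I: (x²−y², x²−z²); Ia: (x²+y²+z², xz); Ib: (x²+y²−z², xz); II: (yz, x(y−z));
IIa: (y²+z², xz); III: (xz, y²); IIIa: (x²+y², z²); IV: (xz−y², xy); V: (xz−y², x²). -/
def mXZ : RMat := !![0,0,1/2;0,0,0;1/2,0,0]
def levyI_f : RMat := !![1,0,0;0,-1,0;0,0,0]
def levyI_g : RMat := !![1,0,0;0,0,0;0,0,-1]
def levyIa_f : RMat := 1
def levyIa_g : RMat := mXZ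
def levyIb_f : RMat := !![1,0,0;0,1,0;0,0,-1]
def levyIb_g : RMat := mXZ
def levyII_f : RMat := !![0,0,0;0,0,1/2;0,1/2,0]
def levyII_g : RMat := !![0,1/2,-1/2;1/2,0,0;-1/2,0,0]
def levyIIa_f : RMat := !![0,0,0;0,1,0;0,0,1]
def levyIIa_g : RMat := mXZ
def levyIII_f : RMat := mXZ
def levyIII_g : RMat := !![0,0,0;0,1,0;0,0,0]
def levyIIIa_f : RMat := !![1,0,0;0,1,0;0,0,0]
def levyIIIa_g : RMat := !![0,0,0;0,0,0;0,0,1]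
def levyIV_f : RMat := !![0,0,1/2;0,-1,0;1/2,0,0]
def levyIV_g : RMat := !![0,1/2,0;1/2,0,0;0,0,0]
def levyV_f : RMat := !![0,0,1/2;0,-1,0;1/2,0,0]
def levyV_g : RMat := !![1,0,0;0,0,0;0,0,0]

lemma lemA (F G : RMat) : (phiP F G).natDegree < 4 := by
  have : (phiP F G).natDegree ≤ 3 := by
    unfold phiP
    rw [Matrix.det_fin_three]
    simp only [pencilPolyMat, Matrix.of_apply]
    compute_degree
  omega

lemma lemB (F G : RMat) (t : ℝ) : (phiP F G).eval t = (t • F + G).det := by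
  unfold phiP
  have : (t • F + G) = (pencilPolyMat F G).map (Polynomial.evalRingHom t) := by
    ext i j
    simp [pencilPolyMat, Matrix.add_apply, Matrix.smul_apply]
    ring
  rw [this, Polynomial.eval, ← Polynomial.coe_eval₂RingHom, RingHom.map_det]
  rfl

lemma lemC (F G : RMat) (t : ℝ) : (t • F + G).det =
    ph F G 3 * t^3 + ph F G 2 * t^2 + ph F G 1 * t + ph F G 0 := by
  rw [← lemB, Polynomial.eval_eq_sum_range' (lemA F G)]
  simp [Finset.sum_range_succ, ph]
  ring

lemma lemD (F G : RMat) : ph F G 0 = G.det := by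
  have := lemC F G 0
  simpa using this.symm

lemma lemE (F G : RMat) : ph F G 3 = F.det := by
  have key : ∀ t : ℝ, t ≠ 0 →
      ph F G 3 * t^3 + ph F G 2 * t^2 + ph F G 1 * t + ph F G 0
      = ph G F 0 * t^3 + ph G F 1 * t^2 + ph G F 2 * t + ph G F 3 := by
    intro t ht
    have h1 : t • F + G = t • (F + t⁻¹ • G) := by
      rw [smul_add, smul_smul, mul_inv_cancel₀ ht, one_smul]
    have h2 : (t • F + G).det = t^3 * (t⁻¹ • G + F).det := by
      rw [h1, Matrix.det_smul, add_comm F]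
      norm_num [Fintype.card_fin]
    rw [lemC, lemC] at h2
    field_simp at h2
    apply mul_right_cancel₀ (pow_ne_zero 6 ht)
    linear_combination t^6 * h2
  have h1 := key 1 one_ne_zero
  have h2 := key (-1) (by norm_num)
  have h3 := key 2 two_ne_zero
  have h4 := key (-2) (by norm_num)
  have : ph F G 3 = ph G F 0 := by norm_num at h1 h2 h3 h4; linarith
  rw [this, lemD]

lemma lemC2 (F G : RMat) (a b : ℝ) : (a • F + b • G).det =
    ph F G 3 * a^3 + ph F G 2 * a^2*b + ph F G 1 * a*b^2 + ph F G 0 * b^3 := by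
  rcases eq_or_ne b 0 with hb | hb
  · subst hb
    rw [show a • F + (0:ℝ) • G = a • F by simp, Matrix.det_smul, ← lemE F G]
    norm_num [Fintype.card_fin]
    ring
  · have h1 : a • F + b • G = b • ((a/b) • F + G) := by
      rw [smul_add, smul_smul]
      field_simp
    rw [h1, Matrix.det_smul, lemC]
    field_simp
    norm_num [Fintype.card_fin]

lemma cubic_pos (b3 b2 b1 b0 t : ℝ) (h3 : 0 < b3) (h2 : 0 ≤ b2) (h1 : 0 ≤ b1)
    (h0 : 0 < b0) (ht0 : 0 ≤ t) (ht1 : t ≤ 1) :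
    0 < b3*(1-t)^3 + b2*((1-t)^2*t) + b1*((1-t)*t^2) + b0*t^3 := by
  have hB : 0 ≤ b2*((1-t)^2*t) := mul_nonneg h2 (mul_nonneg (sq_nonneg _) ht0)
  have hC : 0 ≤ b1*((1-t)*t^2) := mul_nonneg h1 (mul_nonneg (by linarith) (sq_nonneg t))
  rcases le_total t (1/2) with h | h
  · have h18 : (1/8:ℝ) ≤ (1-t)^3 := by nlinarith
    nlinarith [mul_nonneg h0.le (pow_nonneg ht0 3), mul_le_mul_of_nonneg_left h18 h3.le]
  · have h18 : (1/8:ℝ) ≤ t^3 := by nlinarith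
    nlinarith [mul_nonneg h3.le (pow_nonneg (by linarith : (0:ℝ) ≤ 1-t) 3),
      mul_le_mul_of_nonneg_left h18 h0.le]

lemma backward (F G : RMat) (hF : F.det ≠ 0) (hG : G.det ≠ 0)
    (h31 : 0 < ph F G 3 * ph F G 1) (h02 : 0 < ph F G 0 * ph F G 2) :
    SameArc F G := by
  have ha3 : ph F G 3 = F.det := lemE F G
  have ha0 : ph F G 0 = G.det := lemD F G
  have ha3n : ph F G 3 ≠ 0 := ha3 ▸ hF
  have ha0n : ph F G 0 ≠ 0 := ha0 ▸ hG
  have contm : ContinuousOn (fun t : ℝ => t - 1) (Icc 0 1) :=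
    (continuous_id.sub continuous_const).continuousOn
  have cont1 : ContinuousOn (fun t : ℝ => 1 - t) (Icc 0 1) :=
    (continuous_const.sub continuous_id).continuousOn
  have contid : ContinuousOn (fun t : ℝ => t) (Icc 0 1) := continuous_id.continuousOn
  rcases ha3n.lt_or_gt with h3 | h3 <;> rcases ha0n.lt_or_gt with h0 | h0
  · -- a3 < 0, a0 < 0 : a1 < 0, a2 < 0; path (1-t)F + tG
    have h1 : ph F G 1 < 0 := by nlinarith
    have h2 : ph F G 2 < 0 := by nlinarith
    refine ⟨fun t => 1 - t, fun t => t, cont1, contid, ?_,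
      ⟨1, one_ne_zero, by norm_num⟩, ⟨1, one_ne_zero, by norm_num⟩⟩
    intro t ⟨ht0, ht1⟩
    rw [lemC2]
    have := cubic_pos (-(ph F G 3)) (-(ph F G 2)) (-(ph F G 1)) (-(ph F G 0)) t
      (by linarith) (by linarith) (by linarith) (by linarith) ht0 ht1
    intro hc; beta_reduce at hc; nlinarith
  · -- a3 < 0, a0 > 0 : a1 < 0, a2 > 0; path (t-1)F + tG
    have h1 : ph F G 1 < 0 := by nlinarith
    have h2 : 0 < ph F G 2 := by nlinarith
    refine ⟨fun t => t - 1, fun t => t, contm, contid, ?_,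
      ⟨-1, by norm_num, by norm_num⟩, ⟨1, one_ne_zero, by norm_num⟩⟩
    intro t ⟨ht0, ht1⟩
    rw [lemC2]
    have := cubic_pos (-(ph F G 3)) (ph F G 2) (-(ph F G 1)) (ph F G 0) t
      (by linarith) (by linarith) (by linarith) (by linarith) ht0 ht1
    intro hc; beta_reduce at hc; nlinarith
  · -- a3 > 0, a0 < 0 : a1 > 0, a2 < 0; path (t-1)F + tG
    have h1 : 0 < ph F G 1 := by nlinarith
    have h2 : ph F G 2 < 0 := by nlinarith
    refine ⟨fun t => t - 1, fun t => t, contm, contid, ?_,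
      ⟨-1, by norm_num, by norm_num⟩, ⟨1, one_ne_zero, by norm_num⟩⟩
    intro t ⟨ht0, ht1⟩
    rw [lemC2]
    have := cubic_pos (ph F G 3) (-(ph F G 2)) (ph F G 1) (-(ph F G 0)) t
      (by linarith) (by linarith) (by linarith) (by linarith) ht0 ht1
    intro hc; beta_reduce at hc; nlinarith
  · -- all positive; path (1-t)F + tG
    have h1 : 0 < ph F G 1 := by nlinarith
    have h2 : 0 < ph F G 2 := by nlinarith
    refine ⟨fun t => 1 - t, fun t => t, cont1, contid, ?_,
      ⟨1, one_ne_zero, by norm_num⟩, ⟨1, one_ne_zero, by norm_num⟩⟩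
    intro t ⟨ht0, ht1⟩
    rw [lemC2]
    have := cubic_pos (ph F G 3) (ph F G 2) (ph F G 1) (ph F G 0) t
      h3 h2.le h1.le h0 ht0 ht1
    intro hc; beta_reduce at hc; nlinarith

lemma detI (s u : ℝ) : (s • levyI_f + u • levyI_g).det = (1*s+1*u)*(1*s+0*u)*(0*s+1*u) := by
  simp [Matrix.det_fin_three, levyI_f, levyI_g, Matrix.smul_apply, Matrix.add_apply]

lemma detIa (s u : ℝ) : (s • levyIa_f + u • levyIa_g).det =
    (1*s+0*u)*(2*s+1*u)*((1/2)*s+(-(1/4))*u) := by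
  simp [Matrix.det_fin_three, levyIa_f, levyIa_g, mXZ, Matrix.smul_apply, Matrix.add_apply,
    Matrix.one_apply, Matrix.vecHead, Matrix.vecTail]
  ring

lemma detII (s u : ℝ) : (s • levyII_f + u • levyII_g).det =
    (-(1/4)*s+0*u)*(0*s+1*u)*(0*s+1*u) := by
  simp [Matrix.det_fin_three, levyII_f, levyII_g, Matrix.smul_apply, Matrix.add_apply]
  ring

lemma detIIa (s u : ℝ) : (s • levyIIa_f + u • levyIIa_g).det =
    (-(1/4)*s+0*u)*(0*s+1*u)*(0*s+1*u) := by
  simp [Matrix.det_fin_three, levyIIa_f, levyIIa_g, mXZ, Matrix.smul_apply, Matrix.add_apply]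
  ring

lemma detIII (s u : ℝ) : (s • levyIII_f + u • levyIII_g).det =
    (-(1/4)*s+0*u)*(1*s+0*u)*(0*s+1*u) := by
  simp [Matrix.det_fin_three, levyIII_f, levyIII_g, mXZ, Matrix.smul_apply, Matrix.add_apply]
  ring

lemma factor_of_equiv (F G F₀ G₀ : RMat) (p₁ q₁ p₂ q₂ p₃ q₃ : ℝ)
    (hmodel : ∀ s u : ℝ, (s • F₀ + u • G₀).det =
      (p₁*s+q₁*u)*(p₂*s+q₂*u)*(p₃*s+q₃*u))
    (h : PencilEquivTo F G F₀ G₀) :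
    ∃ c e₁ f₁ e₂ f₂ e₃ f₃ : ℝ, ∀ a b : ℝ,
      (a • F + b • G).det = c*((e₁*a+f₁*b)*(e₂*a+f₂*b)*(e₃*a+f₃*b)) := by
  obtain ⟨A, hspan⟩ := h
  have hFmem : F ∈ Submodule.span ℝ ({transform (↑A) F₀, transform (↑A) G₀} : Set RMat) := by
    rw [hspan]; exact Submodule.subset_span (by simp)
  have hGmem : G ∈ Submodule.span ℝ ({transform (↑A) F₀, transform (↑A) G₀} : Set RMat) := by
    rw [hspan]; exact Submodule.subset_span (by simp)
  obtain ⟨α, β, hFeq⟩ := Submodule.mem_span_pair.mp hFmem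
  obtain ⟨γ, δ, hGeq⟩ := Submodule.mem_span_pair.mp hGmem
  refine ⟨((A : RMat).det)^2, p₁*α+q₁*β, p₁*γ+q₁*δ, p₂*α+q₂*β, p₂*γ+q₂*δ,
    p₃*α+q₃*β, p₃*γ+q₃*δ, fun a b => ?_⟩
  have key : a • F + b • G = transform (↑A) ((a*α+b*γ) • F₀ + (a*β+b*δ) • G₀) := by
    rw [← hFeq, ← hGeq]
    simp only [transform, Matrix.mul_add, Matrix.add_mul, Matrix.mul_smul, Matrix.smul_mul,
      smul_add, smul_smul]
    module
  rw [key, transform, Matrix.det_mul, Matrix.det_mul, Matrix.det_transpose, hmodel]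
  ring

lemma indep (F G : RMat) (hF : F.det ≠ 0) (hind : ∀ c : ℝ, G ≠ c • F)
    (x y : ℝ) (hxy : x • F + y • G = 0) : x = 0 ∧ y = 0 := by
  have hFne : F ≠ 0 := fun h => hF (by simp [h])
  have hy : y = 0 := by
    by_contra hy
    have h1 : y • G = (-x) • F := by
      rw [neg_smul, eq_neg_iff_add_eq_zero, add_comm]; exact hxy
    have h2 : G = (-x/y) • F := by
      rw [div_eq_mul_inv, mul_comm, mul_smul, ← h1, inv_smul_smul₀ hy]
    exact hind _ h2
  refine ⟨?_, hy⟩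
  rw [hy, zero_smul, add_zero] at hxy
  rcases smul_eq_zero.mp hxy with h | h
  · exact h
  · exact absurd h hFne

lemma sign_const (g : ℝ → ℝ) (hc : ContinuousOn g (Icc 0 1))
    (hne : ∀ t ∈ Icc (0:ℝ) 1, g t ≠ 0) : 0 < g 0 * g 1 := by
  rcases lt_trichotomy (g 0 * g 1) 0 with h | h | h
  · exfalso
    have h0 : (0:ℝ) ∈ uIcc (g 0) (g 1) := by
      rcases mul_neg_iff.mp h with ⟨h1, h2⟩ | ⟨h1, h2⟩
      · rw [Set.mem_uIcc]; right; exact ⟨h2.le, h1.le⟩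
      · rw [Set.mem_uIcc]; left; exact ⟨h1.le, h2.le⟩
    have := intermediate_value_uIcc (a := (0:ℝ)) (b := 1) (f := g)
      (by rwa [Set.uIcc_of_le zero_le_one])
    obtain ⟨t, ht, hgt⟩ := this h0
    rw [Set.uIcc_of_le zero_le_one] at ht
    exact hne t ht hgt
  · exfalso
    rcases mul_eq_zero.mp h with h | h
    · exact hne 0 (by simp) h
    · exact hne 1 (by simp) h
  · exact h

lemma forward (F G : RMat) (hF : F.det ≠ 0) (hG : G.det ≠ 0) (hind : ∀ c : ℝ, G ≠ c • F)
    (hfac : ∃ c e₁ f₁ e₂ f₂ e₃ f₃ : ℝ, ∀ a b : ℝ,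
      (a • F + b • G).det = c*((e₁*a+f₁*b)*(e₂*a+f₂*b)*(e₃*a+f₃*b)))
    (hsa : SameArc F G) : 0 < ph F G 3 * ph F G 1 ∧ 0 < ph F G 0 * ph F G 2 := by
  obtain ⟨c, e1, f1, e2, f2, e3, f3, hfac⟩ := hfac
  obtain ⟨a, b, ca, cb, hdet, ⟨c0, hc0, hP0⟩, ⟨c1, hc1, hP1⟩⟩ := hsa
  -- endpoints
  have h00 : a 0 - c0 = 0 ∧ b 0 = 0 := by
    refine indep F G hF hind _ _ ?_
    rw [sub_smul, sub_add_eq_add_sub, hP0, sub_self]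
  have h11 : a 1 = 0 ∧ b 1 - c1 = 0 := by
    have := indep G F hG (fun d hd => ?_) (b 1 - c1) (a 1) ?_
    · exact ⟨this.2, this.1⟩
    · -- F = d • G leads to contradiction with hind
      rcases eq_or_ne d 0 with rfl | hd0
      · simp at hd; exact hF (by simp [hd])
      · exact hind d⁻¹ (by rw [hd, inv_smul_smul₀ hd0])
    · rw [sub_smul, sub_add_eq_add_sub, add_comm, hP1, sub_self]
  obtain ⟨ha0, hb0⟩ := h00
  obtain ⟨ha1, hb1⟩ := h11
  rw [sub_eq_zero] at ha0 hb1
  -- nonvanishing of factor data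
  have hdF : F.det = c*((e1*1+f1*0)*(e2*1+f2*0)*(e3*1+f3*0)) := by
    rw [← hfac 1 0]; norm_num
  have hdG : G.det = c*((e1*0+f1*1)*(e2*0+f2*1)*(e3*0+f3*1)) := by
    rw [← hfac 0 1]; norm_num
  have hc : c ≠ 0 := fun h => hF (by rw [hdF, h]; ring)
  have he1 : e1 ≠ 0 := fun h => hF (by rw [hdF, h]; ring)
  have he2 : e2 ≠ 0 := fun h => hF (by rw [hdF, h]; ring)
  have he3 : e3 ≠ 0 := fun h => hF (by rw [hdF, h]; ring)
  have hf1 : f1 ≠ 0 := fun h => hG (by rw [hdG, h]; ring)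
  have hf2 : f2 ≠ 0 := fun h => hG (by rw [hdG, h]; ring)
  have hf3 : f3 ≠ 0 := fun h => hG (by rw [hdG, h]; ring)
  -- sign constancy of each linear factor along the path
  have signs : ∀ e f : ℝ, (∀ t ∈ Icc (0:ℝ) 1, e * a t + f * b t ≠ 0) →
      0 < (e*c0)*(f*c1) := by
    intro e f hne
    have hs := sign_const (fun t => e * a t + f * b t)
      ((continuousOn_const.mul ca).add (continuousOn_const.mul cb)) hne
    rw [ha0, hb0, ha1, hb1] at hs
    nlinarith [hs]
  have nz : ∀ t ∈ Icc (0:ℝ) 1,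
      (e1 * a t + f1 * b t) ≠ 0 ∧ (e2 * a t + f2 * b t) ≠ 0 ∧ (e3 * a t + f3 * b t) ≠ 0 := by
    intro t ht
    have hz := hdet t ht
    rw [hfac] at hz
    refine ⟨fun h => hz ?_, fun h => hz ?_, fun h => hz ?_⟩ <;> rw [h] <;> ring
  have hs1 := signs e1 f1 (fun t ht => (nz t ht).1)
  have hs2 := signs e2 f2 (fun t ht => (nz t ht).2.1)
  have hs3 := signs e3 f3 (fun t ht => (nz t ht).2.2)
  have hcc : (0:ℝ) < (c0*c1)^2 := by positivity
  have P12 : 0 < (e1*f1)*(e2*f2) := by nlinarith [mul_pos hs1 hs2, hcc]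
  have P13 : 0 < (e1*f1)*(e3*f3) := by nlinarith [mul_pos hs1 hs3, hcc]
  have P23 : 0 < (e2*f2)*(e3*f3) := by nlinarith [mul_pos hs2 hs3, hcc]
  -- coefficient identities
  have hpt : ∀ t : ℝ, ph F G 3 * t^3 + ph F G 2 * t^2*1 + ph F G 1 * t*1^2 + ph F G 0 * 1^3
      = c*((e1*t+f1*1)*(e2*t+f2*1)*(e3*t+f3*1)) := by
    intro t; rw [← lemC2]; exact hfac t 1
  have h0' := hpt 0
  have h1' := hpt 1
  have hm1 := hpt (-1)
  have h2' := hpt 2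
  norm_num at h0' h1' hm1 h2'
  have hA3 : ph F G 3 = c*(e1*e2*e3) := by
    linear_combination (1/6)*h2' - (1/2)*h1' + (1/2)*h0' - (1/6)*hm1
  have hA2 : ph F G 2 = c*(e1*e2*f3+e1*f2*e3+f1*e2*e3) := by
    linear_combination (1/2)*h1' - h0' + (1/2)*hm1
  have hA1 : ph F G 1 = c*(e1*f2*f3 + f1*e2*f3 + f1*f2*e3) := by
    linear_combination -(1/6)*h2' + h1' - (1/2)*h0' - (1/3)*hm1
  have hA0 : ph F G 0 = c*(f1*f2*f3) := by linear_combination h0'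
  constructor
  · have key : ph F G 3 * ph F G 1 =
        c^2*(e1^2*((e2*f2)*(e3*f3)) + e2^2*((e1*f1)*(e3*f3)) + e3^2*((e1*f1)*(e2*f2))) := by
      rw [hA3, hA1]; ring
    rw [key]
    have T1 : 0 < e1^2*((e2*f2)*(e3*f3)) := mul_pos (by positivity) P23
    have T2 : 0 < e2^2*((e1*f1)*(e3*f3)) := mul_pos (by positivity) P13
    have T3 : 0 < e3^2*((e1*f1)*(e2*f2)) := mul_pos (by positivity) P12
    exact mul_pos (by positivity) (by linarith)
  · have key : ph F G 0 * ph F G 2 =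
        c^2*(f3^2*((e1*f1)*(e2*f2)) + f2^2*((e1*f1)*(e3*f3)) + f1^2*((e2*f2)*(e3*f3))) := by
      rw [hA0, hA2]; ring
    rw [key]
    have T1 : 0 < f3^2*((e1*f1)*(e2*f2)) := mul_pos (by positivity) P12
    have T2 : 0 < f2^2*((e1*f1)*(e3*f3)) := mul_pos (by positivity) P13
    have T3 : 0 < f1^2*((e2*f2)*(e3*f3)) := mul_pos (by positivity) P23
    exact mul_pos (by positivity) (by linarith)

/-- **Proposition.** Two distinct proper non-empty conics generating a pencil in one of the
orbits I, Ia, II, IIa, III are on a same arc of their pencil (type N) if and only if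
`Φ₃₀Φ₁₂ > 0` and `Φ₀₃Φ₂₁ > 0`. -/
theorem typeN_characterization (F G : RMat) (h : GoodCouple F G)
    (horb : PencilEquivTo F G levyI_f levyI_g ∨ PencilEquivTo F G levyIa_f levyIa_g ∨
      PencilEquivTo F G levyII_f levyII_g ∨ PencilEquivTo F G levyIIa_f levyIIa_g ∨
      PencilEquivTo F G levyIII_f levyIII_g) :
    SameArc F G ↔ (0 < ph F G 3 * ph F G 1 ∧ 0 < ph F G 0 * ph F G 2) := by
  obtain ⟨-, -, hF, hG, hind, -, -⟩ := h
  constructor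
  · intro hsa
    refine forward F G hF hG hind ?_ hsa
    rcases horb with h1 | h2 | h3 | h4 | h5
    · exact factor_of_equiv F G levyI_f levyI_g 1 1 1 0 0 1 detI h1
    · exact factor_of_equiv F G levyIa_f levyIa_g 1 0 2 1 (1/2) (-(1/4)) detIa h2
    · exact factor_of_equiv F G levyII_f levyII_g (-(1/4)) 0 0 1 0 1 detII h3
    · exact factor_of_equiv F G levyIIa_f levyIIa_g (-(1/4)) 0 0 1 0 1 detIIa h4
    · exact factor_of_equiv F G levyIII_f levyIII_g (-(1/4)) 0 1 0 0 1 detIII h5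
  · intro ⟨h31, h02⟩
    exact backward F G hF hG h31 h02
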